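/- (Soundness invariant.) Let L be a list of pairs of elements of Fin N, and let H_final be the forest parent function obtained by starting from the identity function H₀ = id and, for each pair (i, j) in L in order, performing the merge operation (setting the parent of the current root of i to the current root of j when these roots differ). Then for all a b : Fin N, if root H_final a = root H_final b then (a, b) lies in the equivalence relation generated (Relation.EqvGen) by the relation {(i, j) : (i, j) ∈ L}; i.e., every proto-feature produced by the algorithm is connected by a path of visited pairs. -/

import Mathlib

/-- The root of `i` in the forest `H`: the fixed point of `H` reached by
iterating `H` starting from `i` (for a forest parent function on `Fin N`,
`N` iterations always suffice to reach the fixed point). -/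
def root {N : ℕ} (H : Fin N → Fin N) (i : Fin N) : Fin N :=
  H^[N] i

/-- The merge operation for a visited pair `(i, j)`: set the parent of
`root H i` to `root H j` when the two roots differ, do nothing otherwise. -/
def mergeStep {N : ℕ} (H : Fin N → Fin N) (p : Fin N × Fin N) :
    Fin N → Fin N :=
  if root H p.1 = root H p.2 then H
  else Function.update H (root H p.1) (root H p.2)

/-- The friends-of-friends union-find state obtained by starting from the
identity parent function and folding the merge operation over the list of
visited pairs `L`. -/
def runFOF {N : ℕ} (L : List (Fin N × Fin N)) : Fin N → Fin N :=
  L.foldl mergeStep id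

/-- Soundness invariant: any two points assigned the same root by the
algorithm are related by the equivalence relation generated by the visited
pairs, i.e. every proto-feature produced by the algorithm is connected by a
path of visited pairs. -/
private lemma iter_eqv {N : ℕ} {R : Fin N → Fin N → Prop} {H : Fin N → Fin N}
    (hH : ∀ a, Relation.EqvGen R a (H a)) : ∀ n a, Relation.EqvGen R a (H^[n] a) := by
  intro n
  induction n with
  | zero => intro a; exact Relation.EqvGen.refl a
  | succ n ih =>
    intro a
    rw [Function.iterate_succ_apply]
    exact (hH a).trans _ _ _ (ih (H a))

private lemma fold_inv {N : ℕ} {R : Fin N → Fin N → Prop}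
    (L' : List (Fin N × Fin N)) (hL : ∀ p ∈ L', R p.1 p.2) :
    ∀ H : Fin N → Fin N, (∀ a, Relation.EqvGen R a (H a)) →
      ∀ a, Relation.EqvGen R a (L'.foldl mergeStep H a) := by
  induction L' with
  | nil => intro H hH a; exact hH a
  | cons p L ih =>
    intro H hH a
    simp only [List.foldl_cons]
    apply ih (fun q hq => hL q (List.mem_cons_of_mem _ hq))
    intro x
    unfold mergeStep
    split
    · exact hH x
    · rcases eq_or_ne x (root H p.1) with hx | hx
      · subst hx
        rw [Function.update_self]
        have h1 : Relation.EqvGen R p.1 (root H p.1) := iter_eqv hH N p.1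
        have h2 : Relation.EqvGen R p.2 (root H p.2) := iter_eqv hH N p.2
        exact ((h1.symm _ _).trans _ _ _
          (Relation.EqvGen.rel _ _ (hL p List.mem_cons_self))).trans _ _ _ h2
      · rw [Function.update_of_ne hx]; exact hH x

theorem fof_sound {N : ℕ} (L : List (Fin N × Fin N)) (a b : Fin N)
    (h : root (runFOF L) a = root (runFOF L) b) :
    Relation.EqvGen (fun i j : Fin N => (i, j) ∈ L) a b := by
  have hfin : ∀ a, Relation.EqvGen (fun i j : Fin N => (i, j) ∈ L) a (runFOF L a) :=
    fold_inv L (fun p hp => by simpa using hp) id (fun a => Relation.EqvGen.refl a)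
  have ha := iter_eqv hfin N a
  have hb := iter_eqv hfin N b
  rw [show (runFOF L)^[N] a = root (runFOF L) a from rfl, h] at ha
  exact ha.trans _ _ _ (hb.symm _ _)
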